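/- Conversely, any pure state |φ⟩ on ℂ^d ⊗ ℂ^d satisfying T(|φ⟩⟨φ|) = ρ_λ = Σ_l λ_l |Ψ_{0l}⟩⟨Ψ_{0l}| must be of the form |φ⟩ = Σ_l c_l |Ψ_{0l}⟩ with |c_l|² = λ_l for all l. -/

import Mathlib

open scoped BigOperators Classical ComplexOrder

/-- The primitive `d`-th root of unity `η = e^{2πi/d}`. -/
noncomputable def eta (d : ℕ) : ℂ := Complex.exp (2 * (Real.pi : ℂ) * Complex.I / d)

/-- The unitaries `U_{kl} = Σ_r η^{rl} |k+r⟩⟨r|` (index addition mod `d`). -/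
noncomputable def Umat (d : ℕ) [NeZero d] (k l : Fin d) : Matrix (Fin d) (Fin d) ℂ :=
  fun i r => if i = k + r then eta d ^ ((r : ℕ) * (l : ℕ)) else 0

/-- The maximally entangled vectors `Ψ_{kl} = (1/√d) Σ_j |j⟩ ⊗ U_{kl}|j⟩`,
as functions on `Fin d × Fin d` (component at `(a,b)` is `(1/√d)·(U_{kl})_{b a}`). -/
noncomputable def Psi (d : ℕ) [NeZero d] (k l : Fin d) : Fin d × Fin d → ℂ :=
  fun p => (1 / (Real.sqrt d : ℂ)) * Umat d k l p.2 p.1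

/-- Rank-one projector `|v⟩⟨v|`. -/
noncomputable def outer {ι : Type*} (v : ι → ℂ) : Matrix ι ι ℂ :=
  fun i j => v i * (starRingEnd ℂ) (v j)

/-- The symmetry group element `U_{k,l} ⊗ U_{k,-l}` on `ℂ^d ⊗ ℂ^d`. -/
noncomputable def Gmat (d : ℕ) [NeZero d] (k l : Fin d) :
    Matrix (Fin d × Fin d) (Fin d × Fin d) ℂ :=
  fun p q => Umat d k l p.1 q.1 * Umat d k (-l) p.2 q.2

/-- The twirl `T(ρ) = d⁻² Σ_{g∈G} g* ρ g`. -/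
noncomputable def twirl (d : ℕ) [NeZero d]
    (ρ : Matrix (Fin d × Fin d) (Fin d × Fin d) ℂ) :
    Matrix (Fin d × Fin d) (Fin d × Fin d) ℂ :=
  (((d : ℂ)) ^ 2)⁻¹ • ∑ k, ∑ l, (Gmat d k l).conjTranspose * ρ * Gmat d k l

/-- Expectation value `⟨v|ρ|v⟩`. -/
noncomputable def expec {ι : Type*} [Fintype ι] (v : ι → ℂ)
    (ρ : Matrix ι ι ℂ) : ℂ :=
  ∑ p, ∑ q, (starRingEnd ℂ) (v p) * ρ p q * v q

/-- The state `ρ_λ = Σ_l λ_l |Ψ_{0l}⟩⟨Ψ_{0l}|`. -/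
noncomputable def rhoLam (d : ℕ) [NeZero d] (lam : Fin d → ℝ) :
    Matrix (Fin d × Fin d) (Fin d × Fin d) ℂ :=
  ∑ l, ((lam l : ℝ) : ℂ) • outer (Psi d 0 l)

lemma eta_prim (d : ℕ) [NeZero d] : IsPrimitiveRoot (eta d) d := by
  simpa [eta] using Complex.isPrimitiveRoot_exp d (NeZero.ne d)
lemma eta_pow_d (d : ℕ) [NeZero d] : eta d ^ (d:ℕ) = 1 := (eta_prim d).pow_eq_one
lemma eta_ne_zero (d : ℕ) [NeZero d] : eta d ≠ 0 := by
  intro h; have := eta_pow_d d; simp [h, zero_pow (NeZero.ne d)] at this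
lemma abs_eta (d : ℕ) [NeZero d] : ‖eta d‖ = 1 := by
  simp [eta, Complex.norm_exp]
lemma conj_eta_zpow (d : ℕ) [NeZero d] (n : ℤ) :
    (starRingEnd ℂ) (eta d ^ n) = eta d ^ (-n) := by
  rw [map_zpow₀, ← Complex.inv_eq_conj (abs_eta d), zpow_neg, inv_zpow]
lemma eta_zpow_congr (d : ℕ) [NeZero d] {m n : ℤ} (h : m ≡ n [ZMOD d]) :
    eta d ^ m = eta d ^ n := by
  obtain ⟨t, ht⟩ := Int.ModEq.dvd h
  have hn : n = m + d * t := by linarith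
  rw [hn, zpow_add₀ (eta_ne_zero d), zpow_mul, zpow_natCast, eta_pow_d, one_zpow, mul_one]
lemma eta_sum (d : ℕ) [NeZero d] (m : ℤ) :
    ∑ a : Fin d, eta d ^ (((a:ℕ):ℤ) * m) = if (d:ℤ) ∣ m then (d:ℂ) else 0 := by
  have hterm : ∀ a : Fin d, eta d ^ (((a:ℕ):ℤ) * m) = (eta d ^ m) ^ (a:ℕ) := by
    intro a; rw [mul_comm, zpow_mul, ← zpow_natCast (eta d ^ m)]
  simp_rw [hterm]
  rw [Fin.sum_univ_eq_sum_range (fun i => (eta d ^ m) ^ i)]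
  by_cases h : (d:ℤ) ∣ m
  · have h1 : eta d ^ m = 1 := by
      obtain ⟨t, ht⟩ := h
      rw [ht, zpow_mul, zpow_natCast, eta_pow_d, one_zpow]
    simp [h1, h]
  · have hne : eta d ^ m ≠ 1 := fun h1 => h (((eta_prim d).zpow_eq_one_iff_dvd m).mp h1)
    rw [geom_sum_eq hne]
    have h1 : (eta d ^ m) ^ d = 1 := by
      rw [← zpow_natCast (eta d ^ m), ← zpow_mul, mul_comm, zpow_mul, zpow_natCast, eta_pow_d, one_zpow]
    simp [h1, h]
lemma int_mod_modeq (d : ℕ) (x : ℤ) : x % (d:ℤ) ≡ x [ZMOD d] := Int.emod_emod_of_dvd x dvd_rfl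
lemma fin_add_modeq (d : ℕ) [NeZero d] (a b : Fin d) :
    (((a + b : Fin d) : ℕ) : ℤ) ≡ (a:ℕ) + (b:ℕ) [ZMOD d] := by
  have h : ((a + b : Fin d) : ℕ) = ((a:ℕ) + (b:ℕ)) % d := Fin.val_add a b
  rw [h]; push_cast; exact int_mod_modeq d _
lemma fin_neg_modeq (d : ℕ) [NeZero d] (a : Fin d) :
    (((-a : Fin d) : ℕ) : ℤ) ≡ -((a:ℕ):ℤ) [ZMOD d] := by
  have h := fin_add_modeq d (-a) a
  simp only [neg_add_cancel, Fin.val_zero, Nat.cast_zero] at h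
  have h2 : ((((-a:Fin d):ℕ):ℤ) + ((a:ℕ):ℤ)) ≡ 0 [ZMOD d] := by exact_mod_cast h.symm
  simpa using h2.sub_right ((a:ℕ):ℤ)
lemma fin_sub_modeq (d : ℕ) [NeZero d] (a b : Fin d) :
    (((a - b : Fin d) : ℕ) : ℤ) ≡ ((a:ℕ):ℤ) - ((b:ℕ):ℤ) [ZMOD d] := by
  have h : a - b = a + (-b) := by rw [sub_eq_add_neg]
  rw [h]
  calc (((a + (-b) : Fin d) : ℕ) : ℤ) ≡ ((a:ℕ):ℤ) + (((-b:Fin d):ℕ):ℤ) [ZMOD d] := by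
        exact_mod_cast fin_add_modeq d a (-b)
    _ ≡ ((a:ℕ):ℤ) + (-((b:ℕ):ℤ)) [ZMOD d] := (Int.ModEq.refl _).add (fin_neg_modeq d b)
    _ = ((a:ℕ):ℤ) - ((b:ℕ):ℤ) := by ring
lemma fin_dvd_iff (d : ℕ) [NeZero d] (l l' : Fin d) :
    (d:ℤ) ∣ ((l':ℕ):ℤ) - ((l:ℕ):ℤ) ↔ l' = l := by
  constructor
  · intro h
    have h2 : |((l':ℕ):ℤ) - ((l:ℕ):ℤ)| < d := by
      have := l.isLt; have := l'.isLt
      rw [abs_sub_lt_iff]; omega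
    have h3 := Int.eq_zero_of_abs_lt_dvd h h2
    have : (l':ℕ) = (l:ℕ) := by omega
    exact Fin.ext this
  · rintro rfl; simp
lemma sqrt_fact (d : ℕ) [NeZero d] :
    (1 / (Real.sqrt d : ℂ)) * (1 / (Real.sqrt d : ℂ)) = ((d:ℂ))⁻¹ := by
  rw [div_mul_div_comm, one_mul, ← Complex.ofReal_mul, Real.mul_self_sqrt (Nat.cast_nonneg d)]
  norm_num
lemma conj_sqrt (d : ℕ) : (starRingEnd ℂ) (1 / (Real.sqrt d : ℂ)) = 1 / (Real.sqrt d : ℂ) := by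
  simp [map_div₀, Complex.conj_ofReal]
lemma Psi_inner (d : ℕ) [NeZero d] (k l k' l' : Fin d) :
    ∑ p : Fin d × Fin d, (starRingEnd ℂ) (Psi d k l p) * Psi d k' l' p
      = if k = k' ∧ l = l' then 1 else 0 := by
  have hd : (d:ℂ) ≠ 0 := Nat.cast_ne_zero.mpr (NeZero.ne d)
  rw [Fintype.sum_prod_type]
  by_cases hk : k = k'
  · subst hk
    have hrow : ∀ a : Fin d, (∑ b, (starRingEnd ℂ) (Psi d k l (a,b)) * Psi d k l' (a,b))
        = ((d:ℂ))⁻¹ * eta d ^ ((((a:ℕ):ℤ)) * (((l':ℕ):ℤ) - ((l:ℕ):ℤ))) := by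
      intro a
      rw [Finset.sum_eq_single (k + a)]
      · simp only [Psi, Umat, if_pos rfl, if_true, ite_true, map_mul, conj_sqrt]
        rw [← zpow_natCast (eta d) ((a:ℕ)*(l:ℕ)), ← zpow_natCast (eta d) ((a:ℕ)*(l':ℕ)),
          conj_eta_zpow]
        rw [show (1 / (Real.sqrt d : ℂ)) * eta d ^ (-(((a:ℕ)*(l:ℕ) : ℕ):ℤ)) *
            ((1 / (Real.sqrt d : ℂ)) * eta d ^ ((((a:ℕ)*(l':ℕ) : ℕ)):ℤ))
            = ((1 / (Real.sqrt d : ℂ)) * (1 / (Real.sqrt d : ℂ))) *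
              (eta d ^ (-(((a:ℕ)*(l:ℕ) : ℕ):ℤ)) * eta d ^ ((((a:ℕ)*(l':ℕ) : ℕ)):ℤ)) by ring]
        rw [sqrt_fact, ← zpow_add₀ (eta_ne_zero d)]
        congr 1
        push_cast
        ring
      · intro b _ hb
        simp [Psi, Umat, hb]
      · simp
    rw [Finset.sum_congr rfl (fun a _ => hrow a), ← Finset.mul_sum, eta_sum]
    by_cases hl : l' = l
    · subst hl; rw [if_pos (by simp [fin_dvd_iff]), if_pos ⟨rfl, rfl⟩, inv_mul_cancel₀ hd]
    · rw [if_neg (fun h => hl ((fin_dvd_iff d l l').mp h)),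
        if_neg (fun h => hl h.2.symm), mul_zero]
  · rw [if_neg (fun h => hk h.1)]
    refine Finset.sum_eq_zero fun a _ => Finset.sum_eq_zero fun b _ => ?_
    by_cases h1 : b = k + a
    · have h2 : b ≠ k' + a := by
        intro h2; exact hk (add_right_cancel (h1 ▸ h2))
      simp [Psi, Umat, h2]
    · simp [Psi, Umat, h1]
lemma cond_iff (d : ℕ) [NeZero d] (x y k : Fin d) : (x = k + y) ↔ (k = x - y) := by
  constructor
  · rintro rfl; rw [add_sub_cancel_right]
  · rintro rfl; rw [sub_add_cancel]
lemma cond_iff' (d : ℕ) [NeZero d] (x y k : Fin d) : (x = y + k) ↔ (k = x - y) := by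
  rw [add_comm]; exact cond_iff d x y k
lemma Psi_complete (d : ℕ) [NeZero d] (p q : Fin d × Fin d) :
    ∑ k : Fin d, ∑ l : Fin d, Psi d k l p * (starRingEnd ℂ) (Psi d k l q)
      = if p = q then 1 else 0 := by
  have hd : (d:ℂ) ≠ 0 := Nat.cast_ne_zero.mpr (NeZero.ne d)
  have hterm : ∀ k l : Fin d, Psi d k l p * (starRingEnd ℂ) (Psi d k l q)
      = if p.2 = k + p.1 ∧ q.2 = k + q.1 then
          ((d:ℂ))⁻¹ * eta d ^ ((((l:ℕ):ℤ)) * (((p.1:ℕ):ℤ) - ((q.1:ℕ):ℤ))) else 0 := by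
    intro k l
    simp only [Psi, Umat, map_mul, conj_sqrt, apply_ite (starRingEnd ℂ), map_zero]
    by_cases h1 : p.2 = k + p.1
    · by_cases h2 : q.2 = k + q.1
      · rw [if_pos h1, if_pos h2, if_pos ⟨h1, h2⟩,
          ← zpow_natCast (eta d) ((p.1:ℕ)*(l:ℕ)), ← zpow_natCast (eta d) ((q.1:ℕ)*(l:ℕ)),
          conj_eta_zpow]
        rw [show (1 / (Real.sqrt d : ℂ)) * eta d ^ ((((p.1:ℕ)*(l:ℕ) : ℕ)):ℤ) *
            ((1 / (Real.sqrt d : ℂ)) * eta d ^ (-(((q.1:ℕ)*(l:ℕ) : ℕ):ℤ)))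
            = ((1 / (Real.sqrt d : ℂ)) * (1 / (Real.sqrt d : ℂ))) *
              (eta d ^ ((((p.1:ℕ)*(l:ℕ) : ℕ)):ℤ) * eta d ^ (-(((q.1:ℕ)*(l:ℕ) : ℕ):ℤ))) by ring]
        rw [sqrt_fact, ← zpow_add₀ (eta_ne_zero d)]
        congr 1
        push_cast
        ring
      · simp [h2]
    · simp [h1]
  simp_rw [hterm]
  have hsum_l : ∀ k : Fin d,
      (∑ l : Fin d, if p.2 = k + p.1 ∧ q.2 = k + q.1 then
          ((d:ℂ))⁻¹ * eta d ^ ((((l:ℕ):ℤ)) * (((p.1:ℕ):ℤ) - ((q.1:ℕ):ℤ))) else 0)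
      = if p.2 = k + p.1 ∧ q.2 = k + q.1 then (if p.1 = q.1 then (1:ℂ) else 0) else 0 := by
    intro k
    by_cases hc : p.2 = k + p.1 ∧ q.2 = k + q.1
    · simp only [if_pos hc]
      rw [← Finset.mul_sum, eta_sum]
      by_cases hp1 : p.1 = q.1
      · rw [if_pos, if_pos hp1, inv_mul_cancel₀ hd]
        exact (fin_dvd_iff d q.1 p.1).mpr hp1
      · rw [if_neg, if_neg hp1, mul_zero]
        exact fun h => hp1 ((fin_dvd_iff d q.1 p.1).mp h)
    · simp [hc]
  rw [Finset.sum_congr rfl (fun k _ => hsum_l k)]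
  by_cases hp1 : p.1 = q.1
  · by_cases hp2 : p.2 = q.2
    · have hpq : p = q := Prod.ext hp1 hp2
      rw [if_pos hpq]
      have hk : ∀ k : Fin d, (if p.2 = k + p.1 ∧ q.2 = k + q.1 then (if p.1 = q.1 then (1:ℂ) else 0) else 0)
          = if k = p.2 - p.1 then (1:ℂ) else 0 := by
        intro k
        by_cases h : k = p.2 - p.1
        · have h1 : p.2 = k + p.1 := (cond_iff d p.2 p.1 k).mpr h
          have h2 : q.2 = k + q.1 := by rw [← hp1, ← hp2]; exact h1
          rw [if_pos ⟨h1, h2⟩, if_pos hp1, if_pos h]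
        · rw [if_neg h, if_neg]
          rintro ⟨h1, -⟩
          exact h ((cond_iff d p.2 p.1 k).mp h1)
      rw [Finset.sum_congr rfl (fun k _ => hk k)]
      simp
    · rw [if_neg (fun h => hp2 (congrArg Prod.snd h))]
      refine Finset.sum_eq_zero fun k _ => ?_
      rw [if_neg]
      rintro ⟨h1, h2⟩
      exact hp2 (by rw [h1, h2, hp1])
  · rw [if_neg (fun h => hp1 (congrArg Prod.fst h))]
    refine Finset.sum_eq_zero fun k _ => ?_
    simp [hp1]
lemma G_mulVec (d : ℕ) [NeZero d] (k l k' l' : Fin d) :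
    (Gmat d k' l').mulVec (Psi d k l)
      = eta d ^ (-((((k':ℕ):ℤ)) * ((l:ℕ):ℤ) + (((k:ℕ):ℤ)) * ((l':ℕ):ℤ))) • Psi d k l := by
  funext p
  simp only [Matrix.mulVec, dotProduct, Pi.smul_apply, smul_eq_mul]
  rw [Fintype.sum_prod_type]
  have hstep1 : ∀ a' : Fin d,
      (∑ b' : Fin d, Gmat d k' l' p (a', b') * Psi d k l (a', b'))
      = Umat d k' l' p.1 a' * (Umat d k' (-l') p.2 (p.2 - k') * Psi d k l (a', p.2 - k')) := by
    intro a'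
    rw [Finset.sum_eq_single (p.2 - k')]
    · simp only [Gmat]; ring
    · intro b' _ hb'
      have : ¬ (p.2 = k' + b') := by
        intro h; exact hb' ((cond_iff' d p.2 k' b').mp h)
      simp only [Gmat, Umat, if_neg this]
      ring
    · simp
  rw [Finset.sum_congr rfl (fun a' _ => hstep1 a'), Finset.sum_eq_single (p.1 - k')]
  · have hc2 : p.2 = k' + (p.2 - k') := (cond_iff' d p.2 k' (p.2 - k')).mpr rfl
    have hc1 : p.1 = k' + (p.1 - k') := (cond_iff' d p.1 k' (p.1 - k')).mpr rfl
    simp only [Umat, if_pos hc1, if_pos hc2]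
    by_cases hc : p.2 = k + p.1
    · have hcc : p.2 - k' = k + (p.1 - k') := by
        rw [hc]; rw [add_sub_assoc]
      simp only [Psi, Umat, if_pos hc, if_pos hcc]
      have hne := eta_ne_zero d
      have hmod : ((((p.1 - k' : Fin d):ℕ):ℤ) * ((l':ℕ):ℤ) + (((p.2 - k' : Fin d):ℕ):ℤ) * ((((-l' : Fin d)):ℕ):ℤ)) + (((p.1 - k' : Fin d):ℕ):ℤ) * ((l:ℕ):ℤ)
          ≡ (-((((k':ℕ):ℤ)) * ((l:ℕ):ℤ) + (((k:ℕ):ℤ)) * ((l':ℕ):ℤ))) + ((p.1:ℕ):ℤ) * ((l:ℕ):ℤ) [ZMOD d] := by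
        have hs := fin_sub_modeq d p.1 k'
        have ht := fin_sub_modeq d p.2 k'
        have hu := fin_neg_modeq d l'
        have hp2 : ((p.2:ℕ):ℤ) ≡ ((k:ℕ):ℤ) + ((p.1:ℕ):ℤ) [ZMOD d] := by
          rw [hc]; exact_mod_cast fin_add_modeq d k p.1
        calc ((((p.1 - k' : Fin d):ℕ):ℤ) * ((l':ℕ):ℤ) + (((p.2 - k' : Fin d):ℕ):ℤ) * ((((-l' : Fin d)):ℕ):ℤ)) + (((p.1 - k' : Fin d):ℕ):ℤ) * ((l:ℕ):ℤ)
            ≡ ((((p.1:ℕ):ℤ) - ((k':ℕ):ℤ)) * ((l':ℕ):ℤ) + ((((p.2:ℕ):ℤ) - ((k':ℕ):ℤ))) * (-((l':ℕ):ℤ))) + ((((p.1:ℕ):ℤ) - ((k':ℕ):ℤ))) * ((l:ℕ):ℤ) [ZMOD d] :=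
              ((hs.mul_right _).add (ht.mul hu)).add (hs.mul_right _)
          _ ≡ ((((p.1:ℕ):ℤ) - ((k':ℕ):ℤ)) * ((l':ℕ):ℤ) + (((((k:ℕ):ℤ) + ((p.1:ℕ):ℤ)) - ((k':ℕ):ℤ))) * (-((l':ℕ):ℤ))) + ((((p.1:ℕ):ℤ) - ((k':ℕ):ℤ))) * ((l:ℕ):ℤ) [ZMOD d] :=
              ((Int.ModEq.refl _).add ((hp2.sub_right _).mul_right _)).add (Int.ModEq.refl _)
          _ = (-((((k':ℕ):ℤ)) * ((l:ℕ):ℤ) + (((k:ℕ):ℤ)) * ((l':ℕ):ℤ))) + ((p.1:ℕ):ℤ) * ((l:ℕ):ℤ) := by ring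
      have key : eta d ^ (((((p.1 - k' : Fin d):ℕ) * (l':ℕ) : ℕ):ℤ)) *
            eta d ^ (((((p.2 - k' : Fin d):ℕ) * (((-l' : Fin d)):ℕ) : ℕ):ℤ)) *
            eta d ^ (((((p.1 - k' : Fin d):ℕ) * (l:ℕ) : ℕ):ℤ))
          = eta d ^ (-((((k':ℕ):ℤ)) * ((l:ℕ):ℤ) + (((k:ℕ):ℤ)) * ((l':ℕ):ℤ))) *
            eta d ^ ((((p.1:ℕ) * (l:ℕ) : ℕ):ℤ)) := by
        rw [← zpow_add₀ hne, ← zpow_add₀ hne, ← zpow_add₀ hne]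
        apply eta_zpow_congr
        push_cast
        exact hmod
      rw [← zpow_natCast (eta d) (((p.1 - k' : Fin d):ℕ) * (l':ℕ)),
          ← zpow_natCast (eta d) (((p.2 - k' : Fin d):ℕ) * (((-l' : Fin d)):ℕ)),
          ← zpow_natCast (eta d) (((p.1 - k' : Fin d):ℕ) * (l:ℕ)),
          ← zpow_natCast (eta d) ((p.1:ℕ) * ((l:ℕ)))]
      linear_combination (1 / (Real.sqrt d : ℂ)) * key
    · have hcc : ¬ (p.2 - k' = k + (p.1 - k')) := by
        intro h; apply hc
        rw [← add_sub_assoc] at h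
        have h2 := congrArg (fun x => x + k') h
        simpa [sub_add_cancel] using h2
      simp [Psi, Umat, if_neg hc, if_neg hcc]
  · intro a' _ ha'
    have : ¬ (p.1 = k' + a') := fun h => ha' ((cond_iff' d p.1 k' a').mp h)
    simp [Umat, if_neg this]
  · simp
lemma expec_eq_dot {ι : Type*} [Fintype ι] (v : ι → ℂ) (ρ : Matrix ι ι ℂ) :
    expec v ρ = dotProduct (star v) (ρ.mulVec v) := by
  unfold expec dotProduct Matrix.mulVec
  refine Finset.sum_congr rfl fun p _ => ?_
  simp only [Pi.star_apply, dotProduct, Finset.mul_sum]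
  refine Finset.sum_congr rfl fun q _ => ?_
  simp only [RCLike.star_def]
  ring
lemma expec_conjug {ι : Type*} [Fintype ι] (v : ι → ℂ) (ρ A : Matrix ι ι ℂ) :
    expec v (A.conjTranspose * ρ * A) = expec (A.mulVec v) ρ := by
  rw [expec_eq_dot, expec_eq_dot, ← Matrix.mulVec_mulVec, ← Matrix.mulVec_mulVec,
    Matrix.dotProduct_mulVec, ← Matrix.star_mulVec]
lemma expec_smulvec {ι : Type*} [Fintype ι] (c : ℂ) (v : ι → ℂ) (ρ : Matrix ι ι ℂ) :
    expec (c • v) ρ = (starRingEnd ℂ) c * c * expec v ρ := by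
  unfold expec
  simp only [Pi.smul_apply, smul_eq_mul, map_mul, Finset.mul_sum]
  refine Finset.sum_congr rfl fun p _ => Finset.sum_congr rfl fun q _ => by ring
lemma expec_matsmul {ι : Type*} [Fintype ι] (c : ℂ) (v : ι → ℂ) (ρ : Matrix ι ι ℂ) :
    expec v (c • ρ) = c * expec v ρ := by
  unfold expec
  simp only [Matrix.smul_apply, smul_eq_mul, Finset.mul_sum]
  refine Finset.sum_congr rfl fun p _ => Finset.sum_congr rfl fun q _ => by ring
lemma expec_matsum {ι κ : Type*} [Fintype ι] [Fintype κ] (v : ι → ℂ)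
    (M : κ → Matrix ι ι ℂ) :
    expec v (∑ i, M i) = ∑ i, expec v (M i) := by
  unfold expec
  simp only [Matrix.sum_apply, Finset.sum_mul, Finset.mul_sum]
  rw [show (∑ p, ∑ q, ∑ i, (starRingEnd ℂ) (v p) * M i p q * v q)
      = ∑ p, ∑ i, ∑ q, (starRingEnd ℂ) (v p) * M i p q * v q from
    Finset.sum_congr rfl fun p _ => Finset.sum_comm, Finset.sum_comm]
lemma expec_outer {ι : Type*} [Fintype ι] (v w : ι → ℂ) :
    expec v (outer w) = (∑ p, (starRingEnd ℂ) (v p) * w p) *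
      (starRingEnd ℂ) (∑ p, (starRingEnd ℂ) (v p) * w p) := by
  rw [map_sum, Finset.sum_mul_sum]
  unfold expec outer
  refine Finset.sum_congr rfl fun p _ => Finset.sum_congr rfl fun q _ => ?_
  simp only [map_mul, RingHomCompTriple.comp_apply, Complex.conj_conj, RingHom.id_apply]
  ring

theorem twirl_preimage_of_rhoLam (d : ℕ) [NeZero d] (lam : Fin d → ℝ)
    (hpos : ∀ l, 0 ≤ lam l) (hsum : ∑ l, lam l = 1)
    (φ : Fin d × Fin d → ℂ) (hφ : ∑ p, ‖φ p‖ ^ 2 = 1)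
    (htw : twirl d (outer φ) = rhoLam d lam) :
    ∃ c : Fin d → ℂ, (∀ l, ‖c l‖ ^ 2 = lam l) ∧
      ∀ p, φ p = ∑ l, c l * Psi d 0 l p := by
  classical
  have hd : (d:ℂ) ≠ 0 := Nat.cast_ne_zero.mpr (NeZero.ne d)
  set S : Fin d → Fin d → ℂ := fun k l => ∑ q, (starRingEnd ℂ) (Psi d k l q) * φ q with hS
  have hinv : ∀ k l : Fin d,
      expec (Psi d k l) (twirl d (outer φ)) = expec (Psi d k l) (outer φ) := by
    intro k l
    rw [twirl, expec_matsmul, expec_matsum]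
    have h1 : ∀ k' : Fin d,
        expec (Psi d k l) (∑ l' : Fin d, (Gmat d k' l').conjTranspose * outer φ * Gmat d k' l')
        = (d:ℂ) * expec (Psi d k l) (outer φ) := by
      intro k'
      rw [expec_matsum]
      have h2 : ∀ l' : Fin d,
          expec (Psi d k l) ((Gmat d k' l').conjTranspose * outer φ * Gmat d k' l')
          = expec (Psi d k l) (outer φ) := by
        intro l'
        rw [expec_conjug, G_mulVec, expec_smulvec, conj_eta_zpow,
          ← zpow_add₀ (eta_ne_zero d)]
        ring_nf
        simp
      rw [Finset.sum_congr rfl fun l' _ => h2 l', Finset.sum_const, Finset.card_univ,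
        Fintype.card_fin, nsmul_eq_mul]
    rw [Finset.sum_congr rfl fun k' _ => h1 k', Finset.sum_const, Finset.card_univ,
      Fintype.card_fin, nsmul_eq_mul]
    field_simp
  have hrho : ∀ k l : Fin d,
      expec (Psi d k l) (rhoLam d lam) = if k = 0 then ((lam l : ℝ):ℂ) else 0 := by
    intro k l
    rw [rhoLam, expec_matsum]
    have h1 : ∀ l' : Fin d, expec (Psi d k l) (((lam l' : ℝ):ℂ) • outer (Psi d 0 l'))
        = if k = 0 ∧ l = l' then ((lam l' : ℝ):ℂ) else 0 := by
      intro l'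
      rw [expec_matsmul, expec_outer, Psi_inner]
      by_cases h : k = 0 ∧ l = l'
      · simp [h]
      · simp [h]
    rw [Finset.sum_congr rfl fun l' _ => h1 l']
    by_cases hk : k = 0
    · simp [hk]
    · simp [hk]
  have hkey : ∀ k l : Fin d, S k l * (starRingEnd ℂ) (S k l)
      = if k = 0 then ((lam l : ℝ):ℂ) else 0 := by
    intro k l
    calc S k l * (starRingEnd ℂ) (S k l) = expec (Psi d k l) (outer φ) :=
          (expec_outer (Psi d k l) φ).symm
      _ = expec (Psi d k l) (twirl d (outer φ)) := (hinv k l).symm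
      _ = expec (Psi d k l) (rhoLam d lam) := by rw [htw]
      _ = if k = 0 then ((lam l : ℝ):ℂ) else 0 := hrho k l
  have hzero : ∀ k l : Fin d, k ≠ 0 → S k l = 0 := by
    intro k l hk
    have h := hkey k l
    rw [if_neg hk] at h
    rcases mul_eq_zero.mp h with h1 | h1
    · exact h1
    · simpa using congrArg (starRingEnd ℂ) h1
  refine ⟨fun l => S 0 l, ?_, ?_⟩
  · intro l
    have h := hkey 0 l
    rw [if_pos rfl, Complex.mul_conj] at h
    have h2 : Complex.normSq (S 0 l) = lam l := by exact_mod_cast h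
    rw [← h2, Complex.normSq_eq_norm_sq]
  · intro p
    have hcomp : φ p = ∑ k, ∑ l, S k l * Psi d k l p := by
      calc φ p = ∑ q, (if p = q then (1:ℂ) else 0) * φ q := by simp
        _ = ∑ q, (∑ k, ∑ l, Psi d k l p * (starRingEnd ℂ) (Psi d k l q)) * φ q := by
            simp_rw [Psi_complete]
        _ = ∑ k, ∑ l, S k l * Psi d k l p := by
            simp_rw [Finset.sum_mul, hS]
            rw [Finset.sum_comm]
            refine Finset.sum_congr rfl fun k _ => ?_
            rw [Finset.sum_comm]
            refine Finset.sum_congr rfl fun l _ => ?_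
            rw [Finset.sum_mul]
            exact Finset.sum_congr rfl fun q _ => by ring
    rw [hcomp, Finset.sum_eq_single 0]
    · intro k _ hk
      exact Finset.sum_eq_zero fun l _ => by rw [hzero k l hk, zero_mul]
    · simp
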